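/- The group G presented by generators b, c, x, y and relators xy = yx, b² = x, c³ = y is not abelian, and there is no surjective group homomorphism from G onto the free group F₂ of rank 2. -/
import Mathlib


/-- Generators `b, c, x, y`. -/
def b7 : FreeGroup (Fin 4) := FreeGroup.of 0
def c7 : FreeGroup (Fin 4) := FreeGroup.of 1
def x7 : FreeGroup (Fin 4) := FreeGroup.of 2
def y7 : FreeGroup (Fin 4) := FreeGroup.of 3

/-- Relators `xy = yx`, `b² = x`, `c³ = y`. -/
def rels7 : Set (FreeGroup (Fin 4)) :=
  {x7 * y7 * (y7 * x7)⁻¹, b7 ^ 2 * x7⁻¹, c7 ^ 3 * y7⁻¹}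

private abbrev P3 := Equiv.Perm (Fin 3)

private lemma mk_rel_one {r : FreeGroup (Fin 4)} (hr : r ∈ rels7) :
    PresentedGroup.mk rels7 r = 1 :=
  (QuotientGroup.eq_one_iff _).mpr (Subgroup.subset_normalClosure hr)

private lemma rel1 : (PresentedGroup.of 2 : PresentedGroup rels7) = PresentedGroup.of 0 ^ 2 := by
  have h := mk_rel_one (r := b7 ^ 2 * x7⁻¹) (by simp [rels7])
  rw [map_mul, map_pow, map_inv] at h
  have := mul_eq_one_iff_eq_inv.mp h
  rw [inv_inv] at this
  exact this.symm

private lemma rel2 : (PresentedGroup.of 3 : PresentedGroup rels7) = PresentedGroup.of 1 ^ 3 := by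
  have h := mk_rel_one (r := c7 ^ 3 * y7⁻¹) (by simp [rels7])
  rw [map_mul, map_pow, map_inv] at h
  have := mul_eq_one_iff_eq_inv.mp h
  rw [inv_inv] at this
  exact this.symm

private lemma rel0 :
    (PresentedGroup.of 2 : PresentedGroup rels7) * PresentedGroup.of 3
      = PresentedGroup.of 3 * PresentedGroup.of 2 := by
  have h := mk_rel_one (r := x7 * y7 * (y7 * x7)⁻¹) (by simp [rels7])
  rw [map_mul, map_mul, map_inv, map_mul] at h
  have := mul_inv_eq_one.mp h
  exact this

/-- Any two homomorphisms out of our group agreeing on `b, c` are equal. -/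
private lemma hom_ext {G : Type*} [Group G] {g₁ g₂ : PresentedGroup rels7 →* G}
    (h0 : g₁ (.of 0) = g₂ (.of 0)) (h1 : g₁ (.of 1) = g₂ (.of 1)) : g₁ = g₂ := by
  apply PresentedGroup.ext
  intro i
  fin_cases i
  · exact h0
  · exact h1
  · rw [show ((⟨2, by norm_num⟩ : Fin 4)) = (2 : Fin 4) from rfl, rel1, map_pow, map_pow, h0]
  · rw [show ((⟨3, by norm_num⟩ : Fin 4)) = (3 : Fin 4) from rfl, rel2, map_pow, map_pow, h1]

set_option maxRecDepth 8000 in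
/-- The group `⟨b, c, x, y | [x,y], b² = x, c³ = y⟩` is not abelian, yet admits no
surjective homomorphism onto the free group `F₂`. -/
theorem nonmaximal_example_fails_Tits :
    (¬ ∀ g h : PresentedGroup rels7, g * h = h * g) ∧
    ¬ ∃ f : PresentedGroup rels7 →* FreeGroup (Fin 2), Function.Surjective f := by
  constructor
  · -- map onto S₃ : b ↦ transposition, c ↦ 3-cycle, x ↦ 1, y ↦ 1
    intro hab
    let φ : Fin 4 → P3 := ![Equiv.swap 0 1, finRotate 3, 1, 1]
    have hrels : ∀ r ∈ rels7, FreeGroup.lift φ r = 1 := by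
      intro r hr
      rcases hr with h | h | h <;> subst h <;>
        simp only [b7, c7, x7, y7, map_mul, map_pow, map_inv, FreeGroup.lift_apply_of] <;>
        decide
    let g := PresentedGroup.toGroup hrels
    have := hab (PresentedGroup.of 0) (PresentedGroup.of 1)
    have h2 : φ 0 * φ 1 = φ 1 * φ 0 := by
      have := congrArg g this
      simpa [g, map_mul, PresentedGroup.toGroup.of] using this
    revert h2
    decide
  · rintro ⟨f, hf⟩
    -- pull back homomorphisms F₂ → S₃ to homs from our group, recorded by images of b, c
    let T := {p : P3 × P3 // (p.1 ^ 2) * (p.2 ^ 3) = (p.2 ^ 3) * (p.1 ^ 2)}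
    have comm : ∀ g : PresentedGroup rels7 →* P3,
        (g (.of 0) ^ 2) * (g (.of 1) ^ 3) = (g (.of 1) ^ 3) * (g (.of 0) ^ 2) := by
      intro g
      have := congrArg g rel0
      simpa [map_mul, ← map_pow, ← rel1, ← rel2] using this
    let Φ : (Fin 2 → P3) → T := fun φ =>
      ⟨(((FreeGroup.lift φ).comp f) (.of 0), ((FreeGroup.lift φ).comp f) (.of 1)),
        comm _⟩
    have hinj : Function.Injective Φ := by
      intro φ ψ h
      have h' : ((FreeGroup.lift φ).comp f) = ((FreeGroup.lift ψ).comp f) := by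
        apply hom_ext
        · exact congrArg (fun t : T => t.1.1) h
        · exact congrArg (fun t : T => t.1.2) h
      have h'' : FreeGroup.lift φ = FreeGroup.lift ψ :=
        (MonoidHom.cancel_right hf).mp h'
      funext i
      have := congrArg (fun m : FreeGroup (Fin 2) →* P3 => m (FreeGroup.of i)) h''
      simpa [FreeGroup.lift_apply_of] using this
    have hcard := Fintype.card_le_of_injective Φ hinj
    have c1 : Fintype.card (Fin 2 → P3) = 36 := by decide
    have c2 : Fintype.card T = 30 := by decide
    rw [c1, c2] at hcard
    omega
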